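/- Let A ∈ ℂ^{n×n} be Hermitian positive semidefinite and B ∈ ℂ^{n×n} Hermitian. Then tr[(A·B)²] ≥ 0. Moreover, if A is positive definite and B ≠ 0, then tr[(A·B)²] > 0. -/

import Mathlib

set_option maxHeartbeats 1000000

open Matrix
open scoped ComplexOrder

section
open scoped MatrixOrder

noncomputable def Matrix.PosSemidef.sqrt {n : ℕ} {A : Matrix (Fin n) (Fin n) ℂ}
    (_hA : A.PosSemidef) : Matrix (Fin n) (Fin n) ℂ := CFC.sqrt A

lemma Matrix.PosSemidef.posSemidef_sqrt {n : ℕ} {A : Matrix (Fin n) (Fin n) ℂ}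
    (hA : A.PosSemidef) : hA.sqrt.PosSemidef := (CFC.sqrt_nonneg A).posSemidef

lemma Matrix.PosSemidef.sqrt_mul_self {n : ℕ} {A : Matrix (Fin n) (Fin n) ℂ}
    (hA : A.PosSemidef) : hA.sqrt * hA.sqrt = A := CFC.sqrt_mul_sqrt_self A hA.nonneg

end

theorem trace_sq_product_nonneg
    {n : ℕ} (A B : Matrix (Fin n) (Fin n) ℂ)
    (hA : A.PosSemidef) (hB : B.IsHermitian) :
    0 ≤ (((A * B) ^ 2).trace).re ∧
      (A.PosDef → B ≠ 0 → 0 < (((A * B) ^ 2).trace).re) := by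
  set S := hA.sqrt with hSdef
  have hS : S.IsHermitian := hA.posSemidef_sqrt.1
  set M := S * B * S with hMdef
  have hM : Mᴴ = M := by
    simp [hMdef, Matrix.conjTranspose_mul, hS.eq, hB.eq, mul_assoc]
  have key : ((A * B) ^ 2).trace = (Mᴴ * M).trace := by
    rw [hM, sq, ← hA.sqrt_mul_self]
    rw [show S * S * B * (S * S * B) = S * (S * B * (S * S * B)) by
      simp [mul_assoc]]
    rw [Matrix.trace_mul_comm]
    simp [hMdef, mul_assoc]
  have hre : ((Mᴴ * M).trace).re = ∑ j, ∑ i, Complex.normSq (M i j) := by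
    simp only [Matrix.trace, Matrix.diag, Matrix.mul_apply,
      Matrix.conjTranspose_apply, ← Complex.normSq_eq_conj_mul_self]
    simp [Complex.normSq_apply]
  clear_value S M
  constructor
  · rw [key, hre]
    exact Finset.sum_nonneg fun _ _ => Finset.sum_nonneg fun _ _ => Complex.normSq_nonneg _
  · intro hAd hBne
    have hMne : M ≠ 0 := by
      intro h0
      have hSu : IsUnit S := by
        rw [Matrix.isUnit_iff_isUnit_det]
        have hdet : S.det * S.det = A.det := by
          rw [← Matrix.det_mul, hSdef, hA.sqrt_mul_self]
        have : IsUnit (S.det * S.det) := hdet ▸ hAd.det_pos.ne'.isUnit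
        exact (isUnit_mul_self_iff.mp this)
      haveI := hSu.invertible
      apply hBne
      have : B = ⅟S * M * ⅟S := by
        rw [hMdef]
        rw [← mul_assoc, ← mul_assoc, invOf_mul_self, one_mul, mul_assoc,
          mul_invOf_self, mul_one]
      rw [this, h0, mul_zero, zero_mul]
    rw [key, hre]
    obtain ⟨i, j, hij⟩ : ∃ i j, M i j ≠ 0 := by
      by_contra h
      push_neg at h
      exact hMne (by ext i j; simp [h i j])
    have hpos : 0 < Complex.normSq (M i j) := Complex.normSq_pos.mpr hij
    calc (0:ℝ) < Complex.normSq (M i j) := hpos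
      _ ≤ ∑ i, Complex.normSq (M i j) :=
        Finset.single_le_sum (f := fun k => Complex.normSq (M k j))
          (fun k _ => Complex.normSq_nonneg _) (Finset.mem_univ i)
      _ ≤ ∑ j, ∑ i, Complex.normSq (M i j) :=
        Finset.single_le_sum (f := fun j => ∑ i, Complex.normSq (M i j))
          (fun k _ => Finset.sum_nonneg fun _ _ => Complex.normSq_nonneg _)
          (Finset.mem_univ j)
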